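/- Let F be a formula with exactly n occurrences of quantifiers and let F' be its (unique) →-normal form. Then every maximal →ℐ-derivation starting from F (innermost rewriting) has length exactly n and ends in F'; moreover, n is the minimal length of a →-derivation from F to F', i.e., every sequence F = G₀ → G₁ → … → G_m = F' satisfies m ≥ n. -/

import Mathlib

mutual
  /-- Terms of first-order logic extended with Hilbert's ε-operator,
  in de Bruijn representation (so formulas are automatically identified up
  to renaming of bound variables). -/
  inductive Tm : Type
    | var : ℕ → Tm
    | fn : ℕ → (k : ℕ) → (Fin k → Tm) → Tm
    | eps : Fm → Tm
  /-- Formulas; `ex F`, `all F` and `Tm.eps F` bind de Bruijn index 0 of `F`. -/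
  inductive Fm : Type
    | pred : ℕ → (k : ℕ) → (Fin k → Tm) → Fm
    | not : Fm → Fm
    | or : Fm → Fm → Fm
    | and : Fm → Fm → Fm
    | imp : Fm → Fm → Fm
    | ex : Fm → Fm
    | all : Fm → Fm
end

/-- Lifting a renaming under a binder. -/
def upRen (r : ℕ → ℕ) : ℕ → ℕ
  | 0 => 0
  | n + 1 => r n + 1

mutual
  /-- Renaming of free variables in a term. -/
  def renT (r : ℕ → ℕ) : Tm → Tm
    | .var i => .var (r i)
    | .fn f k a => .fn f k (fun i => renT r (a i))
    | .eps F => .eps (renF (upRen r) F)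
  /-- Renaming of free variables in a formula. -/
  def renF (r : ℕ → ℕ) : Fm → Fm
    | .pred p k a => .pred p k (fun i => renT r (a i))
    | .not F => .not (renF r F)
    | .or F G => .or (renF r F) (renF r G)
    | .and F G => .and (renF r F) (renF r G)
    | .imp F G => .imp (renF r F) (renF r G)
    | .ex F => .ex (renF (upRen r) F)
    | .all F => .all (renF (upRen r) F)
end

/-- Lifting a substitution under a binder. -/
def upSub (σ : ℕ → Tm) : ℕ → Tm
  | 0 => .var 0
  | n + 1 => renT Nat.succ (σ n)

mutual
  /-- Capture-avoiding simultaneous substitution on terms. -/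
  def subT (σ : ℕ → Tm) : Tm → Tm
    | .var i => σ i
    | .fn f k a => .fn f k (fun i => subT σ (a i))
    | .eps F => .eps (subF (upSub σ) F)
  /-- Capture-avoiding simultaneous substitution on formulas. -/
  def subF (σ : ℕ → Tm) : Fm → Fm
    | .pred p k a => .pred p k (fun i => subT σ (a i))
    | .not F => .not (subF σ F)
    | .or F G => .or (subF σ F) (subF σ G)
    | .and F G => .and (subF σ F) (subF σ G)
    | .imp F G => .imp (subF σ F) (subF σ G)
    | .ex F => .ex (subF (upSub σ) F)
    | .all F => .all (subF (upSub σ) F)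
end

/-- `inst1 F t` is `F{x ↦ t}` for the variable `x` bound just outside `F`
(de Bruijn index 0). -/
def inst1 (F : Fm) (t : Tm) : Fm :=
  subF (fun n => match n with | 0 => t | n + 1 => .var n) F

mutual
  /-- The variable with de Bruijn index `n` occurs free in the term. -/
  def freeT (n : ℕ) : Tm → Prop
    | .var i => i = n
    | .fn _ _ a => ∃ i, freeT n (a i)
    | .eps F => freeF (n + 1) F
  /-- The variable with de Bruijn index `n` occurs free in the formula. -/
  def freeF (n : ℕ) : Fm → Prop
    | .pred _ _ a => ∃ i, freeT n (a i)
    | .not F => freeF n F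
    | .or F G => freeF n F ∨ freeF n G
    | .and F G => freeF n F ∨ freeF n G
    | .imp F G => freeF n F ∨ freeF n G
    | .ex F => freeF (n + 1) F
    | .all F => freeF (n + 1) F
end

mutual
  /-- Number of occurrences of quantifiers (∃ and ∀, but not ε) in a term. -/
  def qcT : Tm → ℕ
    | .var _ => 0
    | .fn _ _ a => ∑ i, qcT (a i)
    | .eps F => qcF F
  /-- Number of occurrences of quantifiers (∃ and ∀, but not ε) in a formula. -/
  def qcF : Fm → ℕ
    | .pred _ _ a => ∑ i, qcT (a i)
    | .not F => qcF F
    | .or F G => qcF F + qcF G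
    | .and F G => qcF F + qcF G
    | .imp F G => qcF F + qcF G
    | .ex F => qcF F + 1
    | .all F => qcF F + 1
end

/-- Quantifier symbols. -/
inductive Quant : Type
  | ex
  | all

/-- `mkQ Q A` is the quantified formula `Qx. A`. -/
def mkQ : Quant → Fm → Fm
  | .ex, A => .ex A
  | .all, A => .all A

/-- `negQ Q A` is `¬^Q A`: `¬A` for `Q = ∀` and `A` for `Q = ∃`. -/
def negQ : Quant → Fm → Fm
  | .ex, A => A
  | .all, A => .not A

/-- `qeRedex Q A` is `A{x ↦ εx. ¬^Q A}`, the contractum of the redex `Qx. A`. -/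
def qeRedex (Q : Quant) (A : Fm) : Fm := inst1 A (.eps (negQ Q A))

mutual
  /-- One rewrite step inside a term, where each rewritten quantified subformula
  `Qx. A` is required to satisfy the side condition `P A`. -/
  inductive StepT (P : Fm → Prop) : Tm → Tm → Prop
    | fn {f k} {a : Fin k → Tm} {j : Fin k} {t' : Tm} :
        StepT P (a j) t' → StepT P (.fn f k a) (.fn f k (Function.update a j t'))
    | eps {F F'} : StepF P F F' → StepT P (.eps F) (.eps F')
  /-- One rewrite step on formulas: replace one occurrence of a subformula
  `Qx. A` (with `P A`) by `A{x ↦ εx. ¬^Q A}`. -/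
  inductive StepF (P : Fm → Prop) : Fm → Fm → Prop
    | root {Q A} : P A → StepF P (mkQ Q A) (qeRedex Q A)
    | pred {p k} {a : Fin k → Tm} {j : Fin k} {t' : Tm} :
        StepT P (a j) t' → StepF P (.pred p k a) (.pred p k (Function.update a j t'))
    | not {F F'} : StepF P F F' → StepF P (.not F) (.not F')
    | orL {F F' G} : StepF P F F' → StepF P (.or F G) (.or F' G)
    | orR {F G G'} : StepF P G G' → StepF P (.or F G) (.or F G')
    | andL {F F' G} : StepF P F F' → StepF P (.and F G) (.and F' G)
    | andR {F G G'} : StepF P G G' → StepF P (.and F G) (.and F G')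
    | impL {F F' G} : StepF P F F' → StepF P (.imp F G) (.imp F' G)
    | impR {F G G'} : StepF P G G' → StepF P (.imp F G) (.imp F G')
    | ex {F F'} : StepF P F F' → StepF P (.ex F) (.ex F')
    | all {F F'} : StepF P F F' → StepF P (.all F) (.all F')
end

/-- The quantifier-elimination rewrite relation `→` on formulas. -/
def Step : Fm → Fm → Prop := StepF (fun _ => True)

/-- `→₀`: the steps rewriting a vacuous quantifier (bound variable not free in the body). -/
def Step0 : Fm → Fm → Prop := StepF (fun A => ¬ freeF 0 A)

/-- `→₁`: the steps rewriting a non-vacuous quantifier. -/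
def Step1 : Fm → Fm → Prop := StepF (fun A => freeF 0 A)

/-- `→ℐ`: the innermost steps, whose rewritten subformula `Qx. A` contains no
quantifier other than the outermost `Q`. -/
def StepI : Fm → Fm → Prop := StepF (fun A => qcF A = 0)

theorem upRen_comp (r s : ℕ → ℕ) : upRen r ∘ upRen s = upRen (r ∘ s) := by
  funext n; cases n <;> rfl

mutual
theorem renT_comp (r s : ℕ → ℕ) (t : Tm) : renT r (renT s t) = renT (r ∘ s) t := by
  cases t with
  | var i => rfl
  | fn f k a => simp only [renT]; exact congrArg _ (funext fun i => renT_comp r s (a i))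
  | eps F => simp only [renT]; rw [renF_comp, upRen_comp]
theorem renF_comp (r s : ℕ → ℕ) (F : Fm) : renF r (renF s F) = renF (r ∘ s) F := by
  cases F with
  | pred p k a => simp only [renF]; exact congrArg _ (funext fun i => renT_comp r s (a i))
  | not F => simp only [renF, renF_comp r s F]
  | or F G | and F G | imp F G => simp only [renF, renF_comp r s F, renF_comp r s G]
  | ex F | all F => simp only [renF, renF_comp (upRen r) (upRen s) F, upRen_comp]
end

theorem upSub_upRen (σ : ℕ → Tm) (r : ℕ → ℕ) : upSub σ ∘ upRen r = upSub (σ ∘ r) := by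
  funext n; cases n <;> rfl

mutual
theorem subT_renT (σ : ℕ → Tm) (r : ℕ → ℕ) (t : Tm) : subT σ (renT r t) = subT (σ ∘ r) t := by
  cases t with
  | var i => rfl
  | fn f k a => simp only [renT, subT]; exact congrArg _ (funext fun i => subT_renT σ r (a i))
  | eps F => simp only [renT, subT]; rw [subF_renF, upSub_upRen]
theorem subF_renF (σ : ℕ → Tm) (r : ℕ → ℕ) (F : Fm) : subF σ (renF r F) = subF (σ ∘ r) F := by
  cases F with
  | pred p k a => simp only [renF, subF]; exact congrArg _ (funext fun i => subT_renT σ r (a i))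
  | not F => simp only [renF, subF, subF_renF σ r F]
  | or F G | and F G | imp F G => simp only [renF, subF, subF_renF σ r F, subF_renF σ r G]
  | ex F | all F => simp only [renF, subF, subF_renF (upSub σ) (upRen r) F, upSub_upRen]
end

theorem upRen_upSub (r : ℕ → ℕ) (σ : ℕ → Tm) :
    renT (upRen r) ∘ upSub σ = upSub (renT r ∘ σ) := by
  funext n; cases n with
  | zero => rfl
  | succ n =>
    show renT (upRen r) (renT Nat.succ (σ n)) = renT Nat.succ (renT r (σ n))
    rw [renT_comp, renT_comp]; rfl

mutual
theorem renT_subT (r : ℕ → ℕ) (σ : ℕ → Tm) (t : Tm) :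
    renT r (subT σ t) = subT (renT r ∘ σ) t := by
  cases t with
  | var i => rfl
  | fn f k a => simp only [renT, subT]; exact congrArg _ (funext fun i => renT_subT r σ (a i))
  | eps F => simp only [renT, subT]; rw [renF_subF, upRen_upSub]
theorem renF_subF (r : ℕ → ℕ) (σ : ℕ → Tm) (F : Fm) :
    renF r (subF σ F) = subF (renT r ∘ σ) F := by
  cases F with
  | pred p k a => simp only [renF, subF]; exact congrArg _ (funext fun i => renT_subT r σ (a i))
  | not F => simp only [renF, subF, renF_subF r σ F]
  | or F G | and F G | imp F G => simp only [renF, subF, renF_subF r σ F, renF_subF r σ G]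
  | ex F | all F => simp only [renF, subF, renF_subF (upRen r) (upSub σ) F, upRen_upSub]
end

theorem upSub_upSub (σ τ : ℕ → Tm) : subT (upSub σ) ∘ upSub τ = upSub (subT σ ∘ τ) := by
  funext n; cases n with
  | zero => rfl
  | succ n =>
    show subT (upSub σ) (renT Nat.succ (τ n)) = renT Nat.succ (subT σ (τ n))
    rw [subT_renT, renT_subT]
    congr 1

mutual
theorem subT_subT (σ τ : ℕ → Tm) (t : Tm) : subT σ (subT τ t) = subT (subT σ ∘ τ) t := by
  cases t with
  | var i => rfl
  | fn f k a => simp only [subT]; exact congrArg _ (funext fun i => subT_subT σ τ (a i))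
  | eps F => simp only [subT]; rw [subF_subF, upSub_upSub]
theorem subF_subF (σ τ : ℕ → Tm) (F : Fm) : subF σ (subF τ F) = subF (subT σ ∘ τ) F := by
  cases F with
  | pred p k a => simp only [subF]; exact congrArg _ (funext fun i => subT_subT σ τ (a i))
  | not F => simp only [subF, subF_subF σ τ F]
  | or F G | and F G | imp F G => simp only [subF, subF_subF σ τ F, subF_subF σ τ G]
  | ex F | all F => simp only [subF, subF_subF (upSub σ) (upSub τ) F, upSub_upSub]
end

theorem upSub_var : upSub Tm.var = Tm.var := by
  funext n; cases n <;> rfl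

mutual
theorem subT_var (t : Tm) : subT Tm.var t = t := by
  cases t with
  | var i => rfl
  | fn f k a => simp only [subT]; exact congrArg _ (funext fun i => subT_var (a i))
  | eps F => simp only [subT, upSub_var, subF_var F]
theorem subF_var (F : Fm) : subF Tm.var F = F := by
  cases F with
  | pred p k a => simp only [subF]; exact congrArg _ (funext fun i => subT_var (a i))
  | not F => simp only [subF, subF_var F]
  | or F G | and F G | imp F G => simp only [subF, subF_var F, subF_var G]
  | ex F | all F => simp only [subF, upSub_var, subF_var F]
end
/-- The substitution `x₀ ↦ t`. -/
def cons1 (t : Tm) : ℕ → Tm := fun n => match n with | 0 => t | n + 1 => .var n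

theorem inst1_eq (F : Fm) (t : Tm) : inst1 F t = subF (cons1 t) F := rfl

theorem renF_inst1 (r : ℕ → ℕ) (F : Fm) (t : Tm) :
    renF r (inst1 F t) = inst1 (renF (upRen r) F) (renT r t) := by
  rw [inst1_eq, inst1_eq, renF_subF, subF_renF]
  congr 1
  funext n; cases n <;> rfl

theorem subF_inst1 (σ : ℕ → Tm) (F : Fm) (t : Tm) :
    subF σ (inst1 F t) = inst1 (subF (upSub σ) F) (subT σ t) := by
  rw [inst1_eq, inst1_eq, subF_subF, subF_subF]
  congr 1
  funext n; cases n with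
  | zero => rfl
  | succ n =>
    show σ n = subT (cons1 (subT σ t)) (renT Nat.succ (σ n))
    rw [subT_renT]
    exact (subT_var (σ n)).symm

theorem renF_negQ (r : ℕ → ℕ) (Q : Quant) (A : Fm) :
    renF r (negQ Q A) = negQ Q (renF r A) := by cases Q <;> rfl

theorem subF_negQ (σ : ℕ → Tm) (Q : Quant) (A : Fm) :
    subF σ (negQ Q A) = negQ Q (subF σ A) := by cases Q <;> rfl

theorem renF_mkQ (r : ℕ → ℕ) (Q : Quant) (A : Fm) :
    renF r (mkQ Q A) = mkQ Q (renF (upRen r) A) := by cases Q <;> rfl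

theorem subF_mkQ (σ : ℕ → Tm) (Q : Quant) (A : Fm) :
    subF σ (mkQ Q A) = mkQ Q (subF (upSub σ) A) := by cases Q <;> rfl

theorem renF_qeRedex (r : ℕ → ℕ) (Q : Quant) (A : Fm) :
    renF r (qeRedex Q A) = qeRedex Q (renF (upRen r) A) := by
  unfold qeRedex
  rw [renF_inst1]
  show inst1 _ (Tm.eps (renF (upRen r) (negQ Q A))) = _
  rw [renF_negQ]

theorem subF_qeRedex (σ : ℕ → Tm) (Q : Quant) (A : Fm) :
    subF σ (qeRedex Q A) = qeRedex Q (subF (upSub σ) A) := by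
  unfold qeRedex
  rw [subF_inst1]
  show inst1 _ (Tm.eps (subF (upSub σ) (negQ Q A))) = _
  rw [subF_negQ]

/- quantifier count lemmas -/

mutual
theorem qcT_ren (r : ℕ → ℕ) (t : Tm) : qcT (renT r t) = qcT t := by
  cases t with
  | var i => rfl
  | fn f k a => simp only [renT, qcT]; exact Finset.sum_congr rfl fun i _ => qcT_ren r (a i)
  | eps F => simp only [renT, qcT]; exact qcF_ren (upRen r) F
theorem qcF_ren (r : ℕ → ℕ) (F : Fm) : qcF (renF r F) = qcF F := by
  cases F with
  | pred p k a => simp only [renF, qcF]; exact Finset.sum_congr rfl fun i _ => qcT_ren r (a i)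
  | not F => simp only [renF, qcF, qcF_ren r F]
  | or F G | and F G | imp F G => simp only [renF, qcF, qcF_ren r F, qcF_ren r G]
  | ex F | all F => simp only [renF, qcF, qcF_ren (upRen r) F]
end

mutual
theorem qcT_sub_le (σ : ℕ → Tm) (t : Tm) : qcT t ≤ qcT (subT σ t) := by
  cases t with
  | var i => exact Nat.zero_le _
  | fn f k a => exact Finset.sum_le_sum fun i _ => qcT_sub_le σ (a i)
  | eps F => exact qcF_sub_le (upSub σ) F
theorem qcF_sub_le (σ : ℕ → Tm) (F : Fm) : qcF F ≤ qcF (subF σ F) := by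
  cases F with
  | pred p k a => exact Finset.sum_le_sum fun i _ => qcT_sub_le σ (a i)
  | not F => exact qcF_sub_le σ F
  | or F G | and F G | imp F G =>
    exact Nat.add_le_add (qcF_sub_le σ F) (qcF_sub_le σ G)
  | ex F | all F => exact Nat.add_le_add_right (qcF_sub_le (upSub σ) F) 1
end

theorem upSub_qc_zero {σ : ℕ → Tm} (h : ∀ i, qcT (σ i) = 0) : ∀ i, qcT (upSub σ i) = 0 := by
  intro i; cases i with
  | zero => rfl
  | succ n => show qcT (renT Nat.succ (σ n)) = 0; rw [qcT_ren]; exact h n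

mutual
theorem qcT_sub_zero (σ : ℕ → Tm) (h : ∀ i, qcT (σ i) = 0) (t : Tm) (ht : qcT t = 0) :
    qcT (subT σ t) = 0 := by
  cases t with
  | var i => exact h i
  | fn f k a =>
    simp only [qcT, subT, Finset.sum_eq_zero_iff, Finset.mem_univ, true_implies] at ht ⊢
    exact fun i => qcT_sub_zero σ h (a i) (ht i)
  | eps F => exact qcF_sub_zero (upSub σ) (upSub_qc_zero h) F ht
theorem qcF_sub_zero (σ : ℕ → Tm) (h : ∀ i, qcT (σ i) = 0) (F : Fm) (hF : qcF F = 0) :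
    qcF (subF σ F) = 0 := by
  cases F with
  | pred p k a =>
    simp only [qcF, subF, Finset.sum_eq_zero_iff, Finset.mem_univ, true_implies] at hF ⊢
    exact fun i => qcT_sub_zero σ h (a i) (hF i)
  | not F => exact qcF_sub_zero σ h F hF
  | or F G | and F G | imp F G =>
    simp only [qcF, subF, Nat.add_eq_zero] at hF ⊢
    exact ⟨qcF_sub_zero σ h F hF.1, qcF_sub_zero σ h G hF.2⟩
  | ex F | all F => simp only [qcF, Nat.add_eq_zero] at hF; exact absurd hF.2 one_ne_zero
end

theorem qcF_mkQ (Q : Quant) (A : Fm) : qcF (mkQ Q A) = qcF A + 1 := by cases Q <;> rfl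

theorem qcF_negQ (Q : Quant) (A : Fm) : qcF (negQ Q A) = qcF A := by cases Q <;> rfl

theorem qcF_qeRedex_le (Q : Quant) (A : Fm) : qcF A ≤ qcF (qeRedex Q A) :=
  qcF_sub_le _ A

theorem qcF_qeRedex_zero {A : Fm} (h : qcF A = 0) (Q : Quant) : qcF (qeRedex Q A) = 0 := by
  apply qcF_sub_zero _ _ A h
  intro i; cases i with
  | zero => show qcF (negQ Q A) = 0; rw [qcF_negQ]; exact h
  | succ n => rfl

theorem sum_qc_update {k : ℕ} (a : Fin k → Tm) (j : Fin k) (t' : Tm) :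
    (∑ i, qcT (Function.update a j t' i)) + qcT (a j) = (∑ i, qcT (a i)) + qcT t' := by
  have h1 : (fun i => qcT (Function.update a j t' i))
      = Function.update (fun i => qcT (a i)) j (qcT t') := by
    funext i
    exact Function.apply_update (fun _ => qcT) a j t' i
  rw [h1, Finset.sum_update_of_mem (Finset.mem_univ j),
    ← Finset.sum_erase_add Finset.univ _ (Finset.mem_univ j), Finset.sdiff_singleton_eq_erase]
  omega
mutual
theorem stepT_qc_le {P : Fm → Prop} {t t' : Tm} (h : StepT P t t') : qcT t ≤ qcT t' + 1 := by
  cases h with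
  | @fn f k a j u h =>
    have := stepT_qc_le h
    have hs := sum_qc_update a j u
    simp only [qcT]; omega
  | eps h => exact stepF_qc_le h
theorem stepF_qc_le {P : Fm → Prop} {F F' : Fm} (h : StepF P F F') : qcF F ≤ qcF F' + 1 := by
  cases h with
  | @root Q A _ =>
    rw [qcF_mkQ]
    exact Nat.add_le_add_right (qcF_qeRedex_le Q A) 1
  | @pred p k a j u h =>
    have := stepT_qc_le h
    have hs := sum_qc_update a j u
    simp only [qcF]; omega
  | not h => have := stepF_qc_le h; simp only [qcF]; omega
  | orL h | andL h | impL h => have := stepF_qc_le h; simp only [qcF]; omega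
  | orR h | andR h | impR h => have := stepF_qc_le h; simp only [qcF]; omega
  | ex h | all h => have := stepF_qc_le h; simp only [qcF]; omega
end

mutual
theorem stepT_qcI {t t' : Tm} (h : StepT (fun A => qcF A = 0) t t') : qcT t = qcT t' + 1 := by
  cases h with
  | @fn f k a j u h =>
    have := stepT_qcI h
    have hs := sum_qc_update a j u
    simp only [qcT]; omega
  | eps h => exact stepF_qcI h
theorem stepF_qcI {F F' : Fm} (h : StepF (fun A => qcF A = 0) F F') : qcF F = qcF F' + 1 := by
  cases h with
  | @root Q A hA => rw [qcF_mkQ, hA, qcF_qeRedex_zero hA]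
  | @pred p k a j u h =>
    have := stepT_qcI h
    have hs := sum_qc_update a j u
    simp only [qcF]; omega
  | not h => have := stepF_qcI h; simp only [qcF]; omega
  | orL h | andL h | impL h => have := stepF_qcI h; simp only [qcF]; omega
  | orR h | andR h | impR h => have := stepF_qcI h; simp only [qcF]; omega
  | ex h | all h => have := stepF_qcI h; simp only [qcF]; omega
end

mutual
theorem stepT_qc_pos {P : Fm → Prop} {t t' : Tm} (h : StepT P t t') : 0 < qcT t := by
  cases h with
  | @fn f k a j u h =>
    have := stepT_qc_pos h
    have : 0 < ∑ i, qcT (a i) :=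
      lt_of_lt_of_le this (Finset.single_le_sum (f := fun i => qcT (a i)) (fun i _ => Nat.zero_le _) (Finset.mem_univ j))
    simpa only [qcT] using this
  | eps h => exact stepF_qc_pos h
theorem stepF_qc_pos {P : Fm → Prop} {F F' : Fm} (h : StepF P F F') : 0 < qcF F := by
  cases h with
  | @root Q A _ => rw [qcF_mkQ]; omega
  | @pred p k a j u h =>
    have := stepT_qc_pos h
    have : 0 < ∑ i, qcT (a i) :=
      lt_of_lt_of_le this (Finset.single_le_sum (f := fun i => qcT (a i)) (fun i _ => Nat.zero_le _) (Finset.mem_univ j))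
    simpa only [qcF] using this
  | not h => have := stepF_qc_pos h; simp only [qcF]; omega
  | orL h | andL h | impL h => have := stepF_qc_pos h; simp only [qcF]; omega
  | orR h | andR h | impR h => have := stepF_qc_pos h; simp only [qcF]; omega
  | ex h | all h => simp only [qcF]; omega
end

mutual
theorem stepT_mono {P P' : Fm → Prop} (hP : ∀ A, P A → P' A) {t t' : Tm}
    (h : StepT P t t') : StepT P' t t' := by
  cases h with
  | fn h => exact .fn (stepT_mono hP h)
  | eps h => exact .eps (stepF_mono hP h)
theorem stepF_mono {P P' : Fm → Prop} (hP : ∀ A, P A → P' A) {F F' : Fm}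
    (h : StepF P F F') : StepF P' F F' := by
  cases h with
  | root hA => exact .root (hP _ hA)
  | pred h => exact .pred (stepT_mono hP h)
  | not h => exact .not (stepF_mono hP h)
  | orL h => exact .orL (stepF_mono hP h)
  | orR h => exact .orR (stepF_mono hP h)
  | andL h => exact .andL (stepF_mono hP h)
  | andR h => exact .andR (stepF_mono hP h)
  | impL h => exact .impL (stepF_mono hP h)
  | impR h => exact .impR (stepF_mono hP h)
  | ex h => exact .ex (stepF_mono hP h)
  | all h => exact .all (stepF_mono hP h)
end

theorem stepI_step {F F' : Fm} (h : StepI F F') : Step F F' :=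
  stepF_mono (fun _ _ => trivial) h

/- Progress: a formula with a quantifier has an innermost step. -/
mutual
theorem progT {t : Tm} (h : qcT t ≠ 0) : ∃ t', StepT (fun A => qcF A = 0) t t' := by
  cases t with
  | var i => exact absurd rfl h
  | fn f k a =>
    simp only [qcT, ne_eq, Finset.sum_eq_zero_iff, Finset.mem_univ, true_implies,
      not_forall] at h
    obtain ⟨j, hj⟩ := h
    obtain ⟨t', ht'⟩ := progT hj
    exact ⟨_, .fn ht'⟩
  | eps F =>
    obtain ⟨F', hF'⟩ := progF h
    exact ⟨_, .eps hF'⟩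
theorem progF {F : Fm} (h : qcF F ≠ 0) : ∃ F', StepF (fun A => qcF A = 0) F F' := by
  cases F with
  | pred p k a =>
    simp only [qcF, ne_eq, Finset.sum_eq_zero_iff, Finset.mem_univ, true_implies,
      not_forall] at h
    obtain ⟨j, hj⟩ := h
    obtain ⟨t', ht'⟩ := progT hj
    exact ⟨_, .pred ht'⟩
  | not F => obtain ⟨F', h'⟩ := progF (F := F) h; exact ⟨_, .not h'⟩
  | or F G =>
    simp only [qcF, ne_eq, Nat.add_eq_zero, not_and_or] at h
    rcases h with h | h
    · obtain ⟨F', h'⟩ := progF h; exact ⟨_, .orL h'⟩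
    · obtain ⟨G', h'⟩ := progF h; exact ⟨_, .orR h'⟩
  | and F G =>
    simp only [qcF, ne_eq, Nat.add_eq_zero, not_and_or] at h
    rcases h with h | h
    · obtain ⟨F', h'⟩ := progF h; exact ⟨_, .andL h'⟩
    · obtain ⟨G', h'⟩ := progF h; exact ⟨_, .andR h'⟩
  | imp F G =>
    simp only [qcF, ne_eq, Nat.add_eq_zero, not_and_or] at h
    rcases h with h | h
    · obtain ⟨F', h'⟩ := progF h; exact ⟨_, .impL h'⟩
    · obtain ⟨G', h'⟩ := progF h; exact ⟨_, .impR h'⟩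
  | ex F =>
    by_cases hF : qcF F = 0
    · exact ⟨_, .root (Q := .ex) hF⟩
    · obtain ⟨F', h'⟩ := progF hF; exact ⟨_, .ex h'⟩
  | all F =>
    by_cases hF : qcF F = 0
    · exact ⟨_, .root (Q := .all) hF⟩
    · obtain ⟨F', h'⟩ := progF hF; exact ⟨_, .all h'⟩
end
mutual
/-- Parallel reduction on terms. -/
inductive ParT : Tm → Tm → Prop
  | var (i : ℕ) : ParT (.var i) (.var i)
  | fn {f k} {a a' : Fin k → Tm} : (∀ i, ParT (a i) (a' i)) → ParT (.fn f k a) (.fn f k a')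
  | eps {F F'} : ParF F F' → ParT (.eps F) (.eps F')
/-- Parallel reduction on formulas. -/
inductive ParF : Fm → Fm → Prop
  | pred {p k} {a a' : Fin k → Tm} : (∀ i, ParT (a i) (a' i)) → ParF (.pred p k a) (.pred p k a')
  | not {F F'} : ParF F F' → ParF (.not F) (.not F')
  | or {F F' G G'} : ParF F F' → ParF G G' → ParF (.or F G) (.or F' G')
  | and {F F' G G'} : ParF F F' → ParF G G' → ParF (.and F G) (.and F' G')
  | imp {F F' G G'} : ParF F F' → ParF G G' → ParF (.imp F G) (.imp F' G')
  | ex {F F'} : ParF F F' → ParF (.ex F) (.ex F')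
  | all {F F'} : ParF F F' → ParF (.all F) (.all F')
  | rootEx {A A'} : ParF A A' → ParF (.ex A) (qeRedex .ex A')
  | rootAll {A A'} : ParF A A' → ParF (.all A) (qeRedex .all A')
end

mutual
theorem parT_refl (t : Tm) : ParT t t := by
  cases t with
  | var i => exact .var i
  | fn f k a => exact .fn fun i => parT_refl (a i)
  | eps F => exact .eps (parF_refl F)
theorem parF_refl (F : Fm) : ParF F F := by
  cases F with
  | pred p k a => exact .pred fun i => parT_refl (a i)
  | not F => exact .not (parF_refl F)
  | or F G => exact .or (parF_refl F) (parF_refl G)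
  | and F G => exact .and (parF_refl F) (parF_refl G)
  | imp F G => exact .imp (parF_refl F) (parF_refl G)
  | ex F => exact .ex (parF_refl F)
  | all F => exact .all (parF_refl F)
end

mutual
theorem parT_ren {t t' : Tm} (h : ParT t t') (r : ℕ → ℕ) : ParT (renT r t) (renT r t') := by
  cases h with
  | var i => exact .var (r i)
  | fn h => exact .fn fun i => parT_ren (h i) r
  | eps h => exact .eps (parF_ren h (upRen r))
theorem parF_ren {F F' : Fm} (h : ParF F F') (r : ℕ → ℕ) : ParF (renF r F) (renF r F') := by
  cases h with
  | pred h => exact .pred fun i => parT_ren (h i) r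
  | not h => exact .not (parF_ren h r)
  | or h₁ h₂ => exact .or (parF_ren h₁ r) (parF_ren h₂ r)
  | and h₁ h₂ => exact .and (parF_ren h₁ r) (parF_ren h₂ r)
  | imp h₁ h₂ => exact .imp (parF_ren h₁ r) (parF_ren h₂ r)
  | ex h => exact .ex (parF_ren h (upRen r))
  | all h => exact .all (parF_ren h (upRen r))
  | @rootEx A A' h =>
    show ParF (Fm.ex (renF (upRen r) A)) (renF r (qeRedex .ex A'))
    rw [renF_qeRedex]
    exact .rootEx (parF_ren h (upRen r))
  | @rootAll A A' h =>
    show ParF (Fm.all (renF (upRen r) A)) (renF r (qeRedex .all A'))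
    rw [renF_qeRedex]
    exact .rootAll (parF_ren h (upRen r))
end

theorem parSub_up {σ σ' : ℕ → Tm} (h : ∀ i, ParT (σ i) (σ' i)) :
    ∀ i, ParT (upSub σ i) (upSub σ' i) := by
  intro i; cases i with
  | zero => exact .var 0
  | succ n => exact parT_ren (h n) Nat.succ

mutual
theorem parT_sub {t t' : Tm} (h : ParT t t') {σ σ' : ℕ → Tm} (hσ : ∀ i, ParT (σ i) (σ' i)) :
    ParT (subT σ t) (subT σ' t') := by
  cases h with
  | var i => exact hσ i
  | fn h => exact .fn fun i => parT_sub (h i) hσ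
  | eps h => exact .eps (parF_sub h (parSub_up hσ))
theorem parF_sub {F F' : Fm} (h : ParF F F') {σ σ' : ℕ → Tm} (hσ : ∀ i, ParT (σ i) (σ' i)) :
    ParF (subF σ F) (subF σ' F') := by
  cases h with
  | pred h => exact .pred fun i => parT_sub (h i) hσ
  | not h => exact .not (parF_sub h hσ)
  | or h₁ h₂ => exact .or (parF_sub h₁ hσ) (parF_sub h₂ hσ)
  | and h₁ h₂ => exact .and (parF_sub h₁ hσ) (parF_sub h₂ hσ)
  | imp h₁ h₂ => exact .imp (parF_sub h₁ hσ) (parF_sub h₂ hσ)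
  | ex h => exact .ex (parF_sub h (parSub_up hσ))
  | all h => exact .all (parF_sub h (parSub_up hσ))
  | @rootEx A A' h =>
    show ParF (Fm.ex (subF (upSub σ) A)) (subF σ' (qeRedex .ex A'))
    rw [subF_qeRedex]
    exact .rootEx (parF_sub h (parSub_up hσ))
  | @rootAll A A' h =>
    show ParF (Fm.all (subF (upSub σ) A)) (subF σ' (qeRedex .all A'))
    rw [subF_qeRedex]
    exact .rootAll (parF_sub h (parSub_up hσ))
end

theorem parF_negQ {A B : Fm} (Q : Quant) (h : ParF A B) : ParF (negQ Q A) (negQ Q B) := by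
  cases Q with
  | ex => exact h
  | all => exact .not h

theorem parF_qeRedex {A B : Fm} (Q : Quant) (h : ParF A B) :
    ParF (qeRedex Q A) (qeRedex Q B) := by
  apply parF_sub h
  intro i; cases i with
  | zero => exact .eps (parF_negQ Q h)
  | succ n => exact .var n

theorem parF_mkQ {A B : Fm} (Q : Quant) (h : ParF A B) : ParF (mkQ Q A) (qeRedex Q B) := by
  cases Q with
  | ex => exact .rootEx h
  | all => exact .rootAll h
mutual
/-- Size of a term. -/
def szT : Tm → ℕ
  | .var _ => 1
  | .fn _ _ a => (∑ i, szT (a i)) + 1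
  | .eps F => szF F + 1
/-- Size of a formula. -/
def szF : Fm → ℕ
  | .pred _ _ a => (∑ i, szT (a i)) + 1
  | .not F => szF F + 1
  | .or F G => szF F + szF G + 1
  | .and F G => szF F + szF G + 1
  | .imp F G => szF F + szF G + 1
  | .ex F => szF F + 1
  | .all F => szF F + 1
end

theorem sz_fn_lt {f k} (a : Fin k → Tm) (i : Fin k) : szT (a i) < szT (.fn f k a) := by
  have := Finset.single_le_sum (f := fun j => szT (a j)) (fun _ _ => Nat.zero_le _)
    (Finset.mem_univ i)
  simp only [szT]; omega

theorem sz_pred_lt {p k} (a : Fin k → Tm) (i : Fin k) : szT (a i) < szF (.pred p k a) := by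
  have := Finset.single_le_sum (f := fun j => szT (a j)) (fun _ _ => Nat.zero_le _)
    (Finset.mem_univ i)
  simp only [szF]; omega
mutual
theorem parT_diamond : ∀ {t t₁ t₂ : Tm}, ParT t t₁ → ParT t t₂ →
    ∃ s, ParT t₁ s ∧ ParT t₂ s := by
  intro t t₁ t₂ h₁ h₂
  cases t with
  | var i =>
    cases h₁; cases h₂; exact ⟨_, .var i, .var i⟩
  | fn f k a =>
    cases h₁ with | fn g₁ =>
    cases h₂ with | fn g₂ =>
    choose s hs₁ hs₂ using fun i => parT_diamond (g₁ i) (g₂ i)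
    exact ⟨.fn f k s, .fn hs₁, .fn hs₂⟩
  | eps F =>
    cases h₁ with | eps g₁ =>
    cases h₂ with | eps g₂ =>
    obtain ⟨H, hH₁, hH₂⟩ := parF_diamond g₁ g₂
    exact ⟨.eps H, .eps hH₁, .eps hH₂⟩
  termination_by t t₁ t₂ h₁ h₂ => szT t
  decreasing_by all_goals (subst_vars; first | exact sz_fn_lt _ _ | exact sz_pred_lt _ _ | (simp only [szT, szF]; omega))
theorem parF_diamond : ∀ {F F₁ F₂ : Fm}, ParF F F₁ → ParF F F₂ →
    ∃ G, ParF F₁ G ∧ ParF F₂ G := by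
  intro F F₁ F₂ h₁ h₂
  cases F with
  | pred p k a =>
    cases h₁ with | pred g₁ =>
    cases h₂ with | pred g₂ =>
    choose s hs₁ hs₂ using fun i => parT_diamond (g₁ i) (g₂ i)
    exact ⟨.pred p k s, .pred hs₁, .pred hs₂⟩
  | not F =>
    cases h₁ with | not g₁ =>
    cases h₂ with | not g₂ =>
    obtain ⟨H, hH₁, hH₂⟩ := parF_diamond g₁ g₂
    exact ⟨.not H, .not hH₁, .not hH₂⟩
  | or F G =>
    cases h₁ with | or g₁ g₁' =>
    cases h₂ with | or g₂ g₂' =>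
    obtain ⟨H, hH₁, hH₂⟩ := parF_diamond g₁ g₂
    obtain ⟨H', hH₁', hH₂'⟩ := parF_diamond g₁' g₂'
    exact ⟨.or H H', .or hH₁ hH₁', .or hH₂ hH₂'⟩
  | and F G =>
    cases h₁ with | and g₁ g₁' =>
    cases h₂ with | and g₂ g₂' =>
    obtain ⟨H, hH₁, hH₂⟩ := parF_diamond g₁ g₂
    obtain ⟨H', hH₁', hH₂'⟩ := parF_diamond g₁' g₂'
    exact ⟨.and H H', .and hH₁ hH₁', .and hH₂ hH₂'⟩
  | imp F G =>
    cases h₁ with | imp g₁ g₁' =>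
    cases h₂ with | imp g₂ g₂' =>
    obtain ⟨H, hH₁, hH₂⟩ := parF_diamond g₁ g₂
    obtain ⟨H', hH₁', hH₂'⟩ := parF_diamond g₁' g₂'
    exact ⟨.imp H H', .imp hH₁ hH₁', .imp hH₂ hH₂'⟩
  | ex A =>
    cases h₁ with
    | ex g₁ =>
      cases h₂ with
      | ex g₂ =>
        obtain ⟨H, hH₁, hH₂⟩ := parF_diamond g₁ g₂
        exact ⟨.ex H, .ex hH₁, .ex hH₂⟩
      | rootEx g₂ =>
        obtain ⟨H, hH₁, hH₂⟩ := parF_diamond g₁ g₂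
        exact ⟨qeRedex .ex H, .rootEx hH₁, parF_qeRedex .ex hH₂⟩
    | rootEx g₁ =>
      cases h₂ with
      | ex g₂ =>
        obtain ⟨H, hH₁, hH₂⟩ := parF_diamond g₁ g₂
        exact ⟨qeRedex .ex H, parF_qeRedex .ex hH₁, .rootEx hH₂⟩
      | rootEx g₂ =>
        obtain ⟨H, hH₁, hH₂⟩ := parF_diamond g₁ g₂
        exact ⟨qeRedex .ex H, parF_qeRedex .ex hH₁, parF_qeRedex .ex hH₂⟩
  | all A =>
    cases h₁ with
    | all g₁ =>
      cases h₂ with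
      | all g₂ =>
        obtain ⟨H, hH₁, hH₂⟩ := parF_diamond g₁ g₂
        exact ⟨.all H, .all hH₁, .all hH₂⟩
      | rootAll g₂ =>
        obtain ⟨H, hH₁, hH₂⟩ := parF_diamond g₁ g₂
        exact ⟨qeRedex .all H, .rootAll hH₁, parF_qeRedex .all hH₂⟩
    | rootAll g₁ =>
      cases h₂ with
      | all g₂ =>
        obtain ⟨H, hH₁, hH₂⟩ := parF_diamond g₁ g₂
        exact ⟨qeRedex .all H, parF_qeRedex .all hH₁, .rootAll hH₂⟩
      | rootAll g₂ =>
        obtain ⟨H, hH₁, hH₂⟩ := parF_diamond g₁ g₂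
        exact ⟨qeRedex .all H, parF_qeRedex .all hH₁, parF_qeRedex .all hH₂⟩
  termination_by F F₁ F₂ h₁ h₂ => szF F
  decreasing_by all_goals (subst_vars; first | exact sz_fn_lt _ _ | exact sz_pred_lt _ _ | (simp only [szT, szF]; omega))
end

/- A quantifier-free formula parallel-reduces only to itself. -/
mutual
theorem parT_fix {t t' : Tm} (h : ParT t t') (ht : qcT t = 0) : t' = t := by
  cases h with
  | var i => rfl
  | @fn f k a a' h =>
    simp only [qcT, Finset.sum_eq_zero_iff, Finset.mem_univ, true_implies] at ht
    exact congrArg _ (funext fun i => parT_fix (h i) (ht i))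
  | eps h => exact congrArg _ (parF_fix h ht)
theorem parF_fix {F F' : Fm} (h : ParF F F') (hF : qcF F = 0) : F' = F := by
  cases h with
  | @pred p k a a' h =>
    simp only [qcF, Finset.sum_eq_zero_iff, Finset.mem_univ, true_implies] at hF
    exact congrArg _ (funext fun i => parT_fix (h i) (hF i))
  | not h => exact congrArg _ (parF_fix h hF)
  | or h₁ h₂ =>
    simp only [qcF, Nat.add_eq_zero] at hF
    rw [parF_fix h₁ hF.1, parF_fix h₂ hF.2]
  | and h₁ h₂ =>
    simp only [qcF, Nat.add_eq_zero] at hF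
    rw [parF_fix h₁ hF.1, parF_fix h₂ hF.2]
  | imp h₁ h₂ =>
    simp only [qcF, Nat.add_eq_zero] at hF
    rw [parF_fix h₁ hF.1, parF_fix h₂ hF.2]
  | ex h | all h | rootEx h | rootAll h => simp only [qcF, Nat.add_eq_zero] at hF; omega
end

/- One step is a parallel step. -/
mutual
theorem stepT_parT {P : Fm → Prop} {t t' : Tm} (h : StepT P t t') : ParT t t' := by
  cases h with
  | @fn f k a j u h =>
    apply ParT.fn
    intro i
    rcases eq_or_ne i j with rfl | hne
    · rw [Function.update_self]; exact stepT_parT h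
    · rw [Function.update_of_ne hne]; exact parT_refl _
  | eps h => exact .eps (stepF_parF h)
theorem stepF_parF {P : Fm → Prop} {F F' : Fm} (h : StepF P F F') : ParF F F' := by
  cases h with
  | @root Q A hA => exact parF_mkQ Q (parF_refl A)
  | @pred p k a j u h =>
    apply ParF.pred
    intro i
    rcases eq_or_ne i j with rfl | hne
    · rw [Function.update_self]; exact stepT_parT h
    · rw [Function.update_of_ne hne]; exact parT_refl _
  | not h => exact .not (stepF_parF h)
  | orL h => exact .or (stepF_parF h) (parF_refl _)
  | orR h => exact .or (parF_refl _) (stepF_parF h)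
  | andL h => exact .and (stepF_parF h) (parF_refl _)
  | andR h => exact .and (parF_refl _) (stepF_parF h)
  | impL h => exact .imp (stepF_parF h) (parF_refl _)
  | impR h => exact .imp (parF_refl _) (stepF_parF h)
  | ex h => exact .ex (stepF_parF h)
  | all h => exact .all (stepF_parF h)
end
/-- Many-step term rewriting. -/
abbrev StarT : Tm → Tm → Prop := Relation.ReflTransGen (StepT (fun _ => True))
/-- Many-step formula rewriting. -/
abbrev StarF : Fm → Fm → Prop := Relation.ReflTransGen Step

theorem star_map {α β} {r : α → α → Prop} {s : β → β → Prop} (f : α → β)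
    (hf : ∀ {A B}, r A B → s (f A) (f B)) {x y} (h : Relation.ReflTransGen r x y) :
    Relation.ReflTransGen s (f x) (f y) := by
  induction h with
  | refl => exact .refl
  | tail _ h₂ ih => exact ih.tail (hf h₂)

theorem starT_fn_update {f k} {g : Fin k → Tm} {j : Fin k} {u v : Tm}
    (h : StarT u v) (hg : g j = u) : StarT (.fn f k g) (.fn f k (Function.update g j v)) := by
  induction h with
  | refl => rw [← hg, Function.update_eq_self]
  | @tail w v h₁ h₂ ih =>
    refine ih.tail ?_
    have : StepT (fun _ => True) (Function.update g j w j) v := by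
      rw [Function.update_self]; exact h₂
    have hstep := StepT.fn (f := f) this
    rwa [Function.update_idem] at hstep

theorem starT_fn {f k} {a b : Fin k → Tm} (h : ∀ i, StarT (a i) (b i)) :
    StarT (.fn f k a) (.fn f k b) := by
  suffices H : ∀ s : Finset (Fin k),
      StarT (.fn f k a) (.fn f k (fun i => if i ∈ s then b i else a i)) by
    have := H Finset.univ
    simpa using this
  intro s
  induction s using Finset.induction with
  | empty => simp only [Finset.notMem_empty, if_false]; exact .refl
  | @insert j s hj ih =>
    refine ih.trans ?_
    have he : (fun i => if i ∈ insert j s then b i else a i)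
        = Function.update (fun i => if i ∈ s then b i else a i) j (b j) := by
      funext i
      rcases eq_or_ne i j with rfl | hne
      · simp [hj]
      · simp [Function.update, hne]
    rw [he]
    exact starT_fn_update (h j) (by simp [hj])

theorem starF_pred_update {p k} {g : Fin k → Tm} {j : Fin k} {u v : Tm}
    (h : StarT u v) (hg : g j = u) : StarF (.pred p k g) (.pred p k (Function.update g j v)) := by
  induction h with
  | refl => rw [← hg, Function.update_eq_self]
  | @tail w v h₁ h₂ ih =>
    refine ih.tail ?_
    have : StepT (fun _ => True) (Function.update g j w j) v := by
      rw [Function.update_self]; exact h₂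
    have hstep := StepF.pred (p := p) this
    rwa [Function.update_idem] at hstep

theorem starF_pred {p k} {a b : Fin k → Tm} (h : ∀ i, StarT (a i) (b i)) :
    StarF (.pred p k a) (.pred p k b) := by
  suffices H : ∀ s : Finset (Fin k),
      StarF (.pred p k a) (.pred p k (fun i => if i ∈ s then b i else a i)) by
    have := H Finset.univ
    simpa using this
  intro s
  induction s using Finset.induction with
  | empty => simp only [Finset.notMem_empty, if_false]; exact .refl
  | @insert j s hj ih =>
    refine ih.trans ?_
    have he : (fun i => if i ∈ insert j s then b i else a i)
        = Function.update (fun i => if i ∈ s then b i else a i) j (b j) := by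
      funext i
      rcases eq_or_ne i j with rfl | hne
      · simp [hj]
      · simp [Function.update, hne]
    rw [he]
    exact starF_pred_update (h j) (by simp [hj])

mutual
theorem parT_star {t t' : Tm} (h : ParT t t') : StarT t t' := by
  cases h with
  | var i => exact .refl
  | fn h => exact starT_fn fun i => parT_star (h i)
  | eps h => exact star_map Tm.eps (fun h => .eps h) (parF_star h)
theorem parF_star {F F' : Fm} (h : ParF F F') : StarF F F' := by
  cases h with
  | pred h => exact starF_pred fun i => parT_star (h i)
  | not h => exact star_map Fm.not (fun h => .not h) (parF_star h)
  | @or F F' G G' h₁ h₂ =>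
    exact (star_map (Fm.or · G) (fun h => .orL h) (parF_star h₁)).trans
      (star_map (Fm.or F' ·) (fun h => .orR h) (parF_star h₂))
  | @and F F' G G' h₁ h₂ =>
    exact (star_map (Fm.and · G) (fun h => .andL h) (parF_star h₁)).trans
      (star_map (Fm.and F' ·) (fun h => .andR h) (parF_star h₂))
  | @imp F F' G G' h₁ h₂ =>
    exact (star_map (Fm.imp · G) (fun h => .impL h) (parF_star h₁)).trans
      (star_map (Fm.imp F' ·) (fun h => .impR h) (parF_star h₂))
  | ex h => exact star_map Fm.ex (fun h => .ex h) (parF_star h)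
  | all h => exact star_map Fm.all (fun h => .all h) (parF_star h)
  | @rootEx A A' h =>
    exact (star_map Fm.ex (fun h => .ex h) (parF_star h)).tail (.root (Q := .ex) trivial)
  | @rootAll A A' h =>
    exact (star_map Fm.all (fun h => .all h) (parF_star h)).tail (.root (Q := .all) trivial)
end

theorem starF_iff_parStar {F G : Fm} :
    StarF F G ↔ Relation.ReflTransGen ParF F G := by
  constructor
  · exact fun h => star_map id (fun h => stepF_parF h) h
  · intro h
    induction h with
    | refl => exact .refl
    | tail _ h₂ ih => exact ih.trans (parF_star h₂)

theorem parF_strip {a b c : Fm} (hab : ParF a b) (hac : Relation.ReflTransGen ParF a c) :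
    ∃ d, Relation.ReflTransGen ParF b d ∧ ParF c d := by
  induction hac with
  | refl => exact ⟨b, .refl, hab⟩
  | tail _ h₂ ih =>
    obtain ⟨d, hbd, hcd⟩ := ih
    obtain ⟨e, hde, hce⟩ := parF_diamond hcd h₂
    exact ⟨e, hbd.tail hde, hce⟩

theorem parF_conf {a b c : Fm} (hab : Relation.ReflTransGen ParF a b)
    (hac : Relation.ReflTransGen ParF a c) :
    ∃ d, Relation.ReflTransGen ParF b d ∧ Relation.ReflTransGen ParF c d := by
  induction hab with
  | refl => exact ⟨c, hac, .refl⟩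
  | tail _ h₂ ih =>
    obtain ⟨d, hbd, hcd⟩ := ih
    obtain ⟨e, hde, hce⟩ := parF_strip h₂ hbd
    exact ⟨e, hde, hcd.tail hce⟩

theorem nf_qc_zero {F : Fm} (h : ∀ G, ¬ Step F G) : qcF F = 0 := by
  by_contra hq
  obtain ⟨G, hG⟩ := progF hq
  exact h G (stepF_mono (fun _ _ => trivial) hG)

theorem parStar_fix {F X : Fm} (h : qcF F = 0) (hs : Relation.ReflTransGen ParF F X) :
    X = F := by
  induction hs with
  | refl => rfl
  | tail _ h₂ ih => rw [ih] at h₂; exact parF_fix h₂ h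

theorem chain_rtg {R : Fm → Fm → Prop} {g : ℕ → Fm} :
    ∀ m, (∀ i < m, R (g i) (g (i + 1))) → Relation.ReflTransGen R (g 0) (g m) := by
  intro m
  induction m with
  | zero => exact fun _ => .refl
  | succ m ih =>
    intro h
    exact (ih fun i hi => h i (by omega)).tail (h m (by omega))

/-- for a formula `F` with `n` quantifier occurrences and
(unique) `→`-normal form `F'`, every maximal innermost (`→ℐ`) derivation from
`F` has length exactly `n` and ends in `F'`; and every `→`-derivation from `F`
to `F'` has length at least `n`. -/
theorem stmt15 (F F' : Fm) (n : ℕ) (hn : qcF F = n)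
    (hnf₁ : Relation.ReflTransGen Step F F') (hnf₂ : ∀ G : Fm, ¬ Step F' G) :
    (∀ (m : ℕ) (g : ℕ → Fm), g 0 = F → (∀ i < m, StepI (g i) (g (i + 1))) →
      (∀ G : Fm, ¬ StepI (g m) G) → m = n ∧ g m = F') ∧
    (∀ (m : ℕ) (g : ℕ → Fm), g 0 = F → (∀ i < m, Step (g i) (g (i + 1))) →
      g m = F' → n ≤ m) := by
  have hq' : qcF F' = 0 := nf_qc_zero hnf₂
  constructor
  · intro m g hg0 hstep hmax
    have hq : ∀ i, i ≤ m → qcF (g i) + i = n := by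
      intro i hi
      induction i with
      | zero => rw [hg0, hn]; omega
      | succ i ih =>
        have h1 := stepF_qcI (hstep i (by omega))
        have h2 := ih (by omega)
        omega
    have hq0 : qcF (g m) = 0 := by
      by_contra h
      obtain ⟨G, hG⟩ := progF h
      exact hmax G hG
    have hm : m = n := by have := hq m le_rfl; omega
    refine ⟨hm, ?_⟩
    have h1 : StarF F (g m) := by
      have := chain_rtg (R := Step) m fun i hi => stepI_step (hstep i hi)
      rwa [hg0] at this
    obtain ⟨H, hbH, hcH⟩ := parF_conf (starF_iff_parStar.1 h1) (starF_iff_parStar.1 hnf₁)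
    rw [← parStar_fix hq0 hbH, ← parStar_fix hq' hcH]
  · intro m g hg0 hstep hgm
    have hq : ∀ i, i ≤ m → n ≤ qcF (g i) + i := by
      intro i hi
      induction i with
      | zero => rw [hg0, hn]; omega
      | succ i ih =>
        have h1 := stepF_qc_le (hstep i (by omega))
        have h2 := ih (by omega)
        omega
    have := hq m le_rfl
    rw [hgm, hq'] at this
    omega
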